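/- Let ℓ > 1 and p ≥ 2, and let E be a continuous injective map from [0,1] into ℝ with E(0) = 1. Define H(x) := |E(x)|^ℓ for x ∈ [0,1] and g(x) := E(|x|^ℓ) for x ∈ [−1,1], and assume H maps [0,1] into [0,1] and g maps [−1,1] into [−1,1]. Suppose there is a real number α with |α| > 1 such that α·g^p(x) = g(α·x) whenever |x| ≤ |α|⁻¹, and set τ := |α|^ℓ. Then for every n ≥ 0 and every x ∈ [0,1] one has g^{pⁿ}(E(τ⁻ⁿ·x)) = E(τ⁻ⁿ·H(x)); equivalently, H = Λₙ⁻¹ ∘ g^{pⁿ} ∘ Λₙ on [0,1], where Λₙ(x) := E(τ⁻ⁿ·x). -/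

import Mathlib

open Set Filter Topology

/-- If `H(x) = |E(x)|^ℓ` on `[0,1]`, `g(x) = E(|x|^ℓ)` on `[-1,1]`, and
`α·g^p(x) = g(α·x)` for `|x| ≤ |α|⁻¹` with `|α| > 1`, then with `τ = |α|^ℓ` one has the
identity `g^[pⁿ] (E (τ⁻ⁿ·x)) = E (τ⁻ⁿ·H(x))` for every `n ≥ 0` and `x ∈ [0,1]`;
equivalently `H = Λₙ⁻¹ ∘ g^[pⁿ] ∘ Λₙ` on `[0,1]` where `Λₙ(x) = E(τ⁻ⁿ·x)`. -/
theorem statement5 (ℓ : ℝ) (hℓ : 1 < ℓ) (p : ℕ) (hp : 2 ≤ p)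
    (E H g : ℝ → ℝ) (α τ : ℝ)
    (hEcont : ContinuousOn E (Icc 0 1)) (hEinj : InjOn E (Icc 0 1))
    (hE0 : E 0 = 1)
    (hH : ∀ x ∈ Icc (0:ℝ) 1, H x = |E x| ^ ℓ)
    (hg : ∀ x ∈ Icc (-1:ℝ) 1, g x = E (|x| ^ ℓ))
    (hHmaps : MapsTo H (Icc 0 1) (Icc 0 1))
    (hgmaps : MapsTo g (Icc (-1:ℝ) 1) (Icc (-1:ℝ) 1))
    (hα : 1 < |α|)
    (hfun : ∀ x : ℝ, |x| ≤ |α|⁻¹ → α * g^[p] x = g (α * x))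
    (hτ : τ = |α| ^ ℓ) :
    ∀ (n : ℕ), ∀ x ∈ Icc (0:ℝ) 1,
      g^[p ^ n] (E (τ⁻¹ ^ n * x)) = E (τ⁻¹ ^ n * H x) := by
  have hℓ0 : (0:ℝ) < ℓ := by linarith
  have hα0 : (0:ℝ) < |α| := by linarith
  have hαne : α ≠ 0 := by
    intro h; rw [h, abs_zero] at hα; linarith
  have hτ1 : 1 < τ := by
    rw [hτ]; exact Real.one_lt_rpow_iff_of_pos hα0 |>.2 (Or.inl ⟨hα, hℓ0⟩)
  have hτ0 : 0 < τ := by linarith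
  have hτinv0 : 0 < τ⁻¹ := inv_pos.2 hτ0
  have hτinv1 : τ⁻¹ ≤ 1 := by
    rw [inv_le_one_iff₀]; right; linarith
  -- τ⁻¹ = (|α|⁻¹) ^ ℓ
  have hτinv : τ⁻¹ = |α|⁻¹ ^ ℓ := by
    rw [hτ, ← Real.inv_rpow hα0.le]
  -- E maps [0,1] into [-1,1]
  have hE_range : ∀ x ∈ Icc (0:ℝ) 1, E x ∈ Icc (-1:ℝ) 1 := by
    intro x hx
    have h1 : H x ∈ Icc (0:ℝ) 1 := hHmaps hx
    have h2 : |E x| ^ ℓ ≤ 1 := by rw [← hH x hx]; exact h1.2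
    have h3 : |E x| ≤ 1 := by
      by_contra h
      push_neg at h
      have : 1 < |E x| ^ ℓ :=
        Real.one_lt_rpow_iff_of_pos (by linarith) |>.2 (Or.inl ⟨h, hℓ0⟩)
      linarith
    exact abs_le.1 h3
  -- iterates of g map [-1,1] into [-1,1]
  have hgiter : ∀ m : ℕ, MapsTo g^[m] (Icc (-1:ℝ) 1) (Icc (-1:ℝ) 1) :=
    fun m => hgmaps.iterate m
  -- basic functional equation: g^[p] (α⁻¹ y) = α⁻¹ * g y for y ∈ [-1,1]
  have hstep : ∀ y ∈ Icc (-1:ℝ) 1, g^[p] (α⁻¹ * y) = α⁻¹ * g y := by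
    intro y hy
    have hy1 : |y| ≤ 1 := abs_le.2 hy
    have habs : |α⁻¹ * y| ≤ |α|⁻¹ := by
      rw [abs_mul, abs_inv]
      calc |α|⁻¹ * |y| ≤ |α|⁻¹ * 1 := by
            exact mul_le_mul_of_nonneg_left hy1 (by positivity)
        _ = |α|⁻¹ := mul_one _
    have := hfun (α⁻¹ * y) habs
    rw [← mul_assoc, mul_inv_cancel₀ hαne, one_mul] at this
    field_simp [hαne] at this ⊢
    linarith [this]
  -- iterated: g^[p * m] (α⁻¹ y) = α⁻¹ * g^[m] y for y ∈ [-1,1]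
  have hkey : ∀ m : ℕ, ∀ y ∈ Icc (-1:ℝ) 1, g^[p * m] (α⁻¹ * y) = α⁻¹ * g^[m] y := by
    intro m
    induction m with
    | zero => simp
    | succ m ih =>
      intro y hy
      have hgy : g y ∈ Icc (-1:ℝ) 1 := hgmaps hy
      have : g^[p * (m + 1)] (α⁻¹ * y) = g^[p * m] (g^[p] (α⁻¹ * y)) := by
        rw [mul_add, mul_one, Function.iterate_add_apply]
      rw [this, hstep y hy, ih (g y) hgy, Function.iterate_succ_apply]
  -- main induction
  intro n
  induction n with
  | zero =>
    intro x hx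
    simp only [pow_zero, one_mul, Function.iterate_one]
    rw [hg (E x) (hE_range x hx), ← hH x hx]
  | succ n ih =>
    intro x hx
    set t : ℝ := τ⁻¹ ^ n with ht
    have ht0 : 0 < t := pow_pos hτinv0 n
    have ht1 : t ≤ 1 := pow_le_one₀ hτinv0.le hτinv1
    have htx : t * x ∈ Icc (0:ℝ) 1 := by
      constructor
      · exact mul_nonneg ht0.le hx.1
      · calc t * x ≤ 1 * 1 := mul_le_mul ht1 hx.2 hx.1 zero_le_one
          _ = 1 := one_mul 1
    -- y := (t*x)^(1/ℓ)
    set y : ℝ := (t * x) ^ ℓ⁻¹ with hy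
    have hy0 : 0 ≤ y := Real.rpow_nonneg htx.1 _
    have hy1 : y ≤ 1 := Real.rpow_le_one htx.1 htx.2 (by positivity)
    have hyI : y ∈ Icc (-1:ℝ) 1 := ⟨by linarith, hy1⟩
    have hyℓ : |y| ^ ℓ = t * x := by
      rw [abs_of_nonneg hy0, hy, Real.rpow_inv_rpow htx.1 (by positivity)]
    have hgyeq : g y = E (t * x) := by rw [hg y hyI, hyℓ]
    -- A := g^[p^n] y
    set A : ℝ := g^[p ^ n] y with hA
    have hAI : A ∈ Icc (-1:ℝ) 1 := hgiter (p ^ n) hyI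
    have hA1 : |A| ≤ 1 := abs_le.2 hAI
    -- g A = E (t * H x)
    have hgA : g A = E (t * H x) := by
      have : g A = g^[p ^ n] (g y) := by
        rw [hA, ← Function.iterate_succ_apply, Function.iterate_succ_apply']
      rw [this, hgyeq, ih x hx]
    -- injectivity gives |A|^ℓ = t * H x
    have hAℓ : |A| ^ ℓ = t * H x := by
      have h1 : |A| ^ ℓ ∈ Icc (0:ℝ) 1 :=
        ⟨Real.rpow_nonneg (abs_nonneg A) _, Real.rpow_le_one (abs_nonneg A) hA1 hℓ0.le⟩
      have hHx : H x ∈ Icc (0:ℝ) 1 := hHmaps hx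
      have h2 : t * H x ∈ Icc (0:ℝ) 1 := by
        constructor
        · exact mul_nonneg ht0.le hHx.1
        · calc t * H x ≤ 1 * 1 := mul_le_mul ht1 hHx.2 hHx.1 zero_le_one
            _ = 1 := one_mul 1
      apply hEinj h1 h2
      rw [← hg A hAI, hgA]
    -- compute E (τ⁻¹^(n+1) * x) = g (α⁻¹ * y)
    have hscale : ∀ z : ℝ, |α⁻¹ * z| ^ ℓ = τ⁻¹ * |z| ^ ℓ := by
      intro z
      rw [abs_mul, abs_inv, Real.mul_rpow (by positivity) (abs_nonneg z), hτinv]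
    have hEg : E (τ⁻¹ ^ (n + 1) * x) = g (α⁻¹ * y) := by
      have hmem : α⁻¹ * y ∈ Icc (-1:ℝ) 1 := by
        have h1 : |α⁻¹ * y| ≤ 1 := by
          rw [abs_mul, abs_inv]
          calc |α|⁻¹ * |y| ≤ 1 * 1 := by
                apply mul_le_mul _ (abs_le.2 hyI) (abs_nonneg y) zero_le_one
                rw [inv_le_one_iff₀]; right; linarith
            _ = 1 := one_mul 1
        exact abs_le.1 h1
      rw [hg _ hmem, hscale y, hyℓ]
      ring_nf
      rw [ht]; ring_nf
    -- final computation
    rw [hEg]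
    have hcomm : g^[p ^ (n + 1)] (g (α⁻¹ * y)) = g (g^[p ^ (n + 1)] (α⁻¹ * y)) := by
      rw [← Function.iterate_succ_apply, Function.iterate_succ_apply']
    rw [hcomm]
    have : g^[p ^ (n + 1)] (α⁻¹ * y) = α⁻¹ * A := by
      rw [pow_succ, mul_comm (p ^ n) p]
      exact hkey (p ^ n) y hyI
    rw [this]
    have hmem2 : α⁻¹ * A ∈ Icc (-1:ℝ) 1 := by
      have h1 : |α⁻¹ * A| ≤ 1 := by
        rw [abs_mul, abs_inv]
        calc |α|⁻¹ * |A| ≤ 1 * 1 := by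
              apply mul_le_mul _ hA1 (abs_nonneg A) zero_le_one
              rw [inv_le_one_iff₀]; right; linarith
          _ = 1 := one_mul 1
      exact abs_le.1 h1
    rw [hg _ hmem2, hscale A, hAℓ]
    ring_nf
    rw [ht]
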